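/- arXiv:2206.00469 — 2 statements merged into one kernel-verified Lean document; each statement's English description precedes it below -/
import Mathlib

section
/- Let n ≥ 1 be odd, let 0 ≤ θ_0 < θ_1 < ... < θ_{n-1} < 2π be real nodes, define β_k(θ) = ((−1)^k Π_{p≠k} sin((θ − θ_p)/2)) / (Σ_{j=0}^{n-1} (−1)^j Π_{p≠j} sin((θ − θ_p)/2)) and b_{k,j}(θ) = (2^j/j!) sin^j((θ − θ_k)/2) · β_k(θ)^{j+1}. Then for every j ∈ ℕ and every pair of distinct indices i ≠ k, the (j+1)-st iterated derivative of b_{k,j} at θ_i equals (−1)^{(j+1)(k+i)} · ((j+1)/2) · (1 / sin((θ_i − θ_k)/2)). -/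
open scoped BigOperators

/-- The pole-free form of Berrut's trigonometric basis function for odd `n`. -/
noncomputable def berrutBasisOdd (n : ℕ) (θ : Fin n → ℝ) (i : Fin n) (t : ℝ) : ℝ :=
  ((-1 : ℝ) ^ (i : ℕ) * ∏ p ∈ Finset.univ.erase i, Real.sin ((t - θ p) / 2)) /
    (∑ j : Fin n, (-1 : ℝ) ^ (j : ℕ) *
      ∏ p ∈ Finset.univ.erase j, Real.sin ((t - θ p) / 2))

/-- The trigonometric Hermite basis for odd `n`. -/
noncomputable def trigHermiteBasisOdd (n : ℕ) (θ : Fin n → ℝ) (k : Fin n) (j : ℕ)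
    (t : ℝ) : ℝ :=
  ((2 : ℝ) ^ j / (Nat.factorial j : ℝ)) * Real.sin ((t - θ k) / 2) ^ j *
    berrutBasisOdd n θ k t ^ (j + 1)

private lemma aux_contDiff_prod {ι : Type*} (s : Finset ι) (f : ι → ℝ → ℝ)
    (h : ∀ i ∈ s, ContDiff ℝ (⊤:ℕ∞) (f i)) :
    ContDiff ℝ (⊤:ℕ∞) (fun t => ∏ i ∈ s, f i t) := by
  classical
  induction s using Finset.cons_induction with
  | empty => simpa using contDiff_const
  | cons a s ha ih =>
    simp only [Finset.prod_cons]
    exact (h a (Finset.mem_cons_self a s)).mul (ih fun i hi => h i (Finset.mem_cons_of_mem hi))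

private lemma aux_contDiff_sn (a : ℝ) :
    ContDiff ℝ (⊤:ℕ∞) (fun t : ℝ => Real.sin ((t - a)/2)) :=
  Real.contDiff_sin.comp ((contDiff_id.sub contDiff_const).div_const 2)

private lemma aux_hasDerivAt_sn (a x : ℝ) :
    HasDerivAt (fun t : ℝ => Real.sin ((t - a)/2)) (Real.cos ((x - a)/2) * (1/2)) x := by
  have h1 : HasDerivAt (fun t : ℝ => (t - a)/2) (1/2) x := by
    simpa using ((hasDerivAt_id x).sub_const a).div_const 2
  exact (Real.hasDerivAt_sin ((x - a)/2)).comp x h1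

/-- Key computation: if `h` vanishes at `x` and `g, h` are smooth near `x`, then for `m ≤ r`,
the `m`-th derivative of `g * h^r` at `x` is `r! g(x) h'(x)^r` if `m = r`, and `0` if `m < r`. -/
private lemma aux_key {s : Set ℝ} (hs : IsOpen s) :
    ∀ (m r : ℕ) (g h : ℝ → ℝ) (x : ℝ), x ∈ s → ContDiffOn ℝ (⊤:ℕ∞) g s →
      ContDiffOn ℝ (⊤:ℕ∞) h s → h x = 0 → m ≤ r →
      iteratedDeriv m (fun t => g t * h t ^ r) x =
        if m = r then (Nat.factorial r : ℝ) * g x * (deriv h x) ^ r else 0 := by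
  intro m
  induction m with
  | zero =>
    intro r g h x hx hg hh h0 hmr
    rcases Nat.eq_zero_or_pos r with hr | hr
    · subst hr; simp [iteratedDeriv_zero]
    · rw [if_neg (by omega)]
      simp [iteratedDeriv_zero, h0, zero_pow hr.ne']
  | succ m ih =>
    intro r g h x hx hg hh h0 hmr
    obtain ⟨r', rfl⟩ : ∃ r', r = r' + 1 := ⟨r - 1, by omega⟩
    have hone : (1 : WithTop ℕ∞) ≤ ((⊤:ℕ∞) : WithTop ℕ∞) := by norm_num
    have htop : ((⊤:ℕ∞) : WithTop ℕ∞) + 1 ≤ ((⊤:ℕ∞) : WithTop ℕ∞) := by norm_num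
    rw [iteratedDeriv_succ']
    have hEq : (deriv fun t => g t * h t ^ (r'+1)) =ᶠ[nhds x]
        (fun t => (deriv g t * h t + ((r':ℝ)+1) * g t * deriv h t) * h t ^ r') := by
      filter_upwards [hs.mem_nhds hx] with y hy
      have hgy : HasDerivAt g (deriv g y) y :=
        ((hg.differentiableOn (zero_lt_one.trans_le hone).ne').differentiableAt (hs.mem_nhds hy)).hasDerivAt
      have hhy : HasDerivAt h (deriv h y) y :=
        ((hh.differentiableOn (zero_lt_one.trans_le hone).ne').differentiableAt (hs.mem_nhds hy)).hasDerivAt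
      have := (hgy.mul (hhy.pow (r'+1))).deriv
      rw [show (fun t => g t * h t ^ (r'+1)) = g * h ^ (r'+1) from rfl, this]
      simp only [Pi.pow_apply, Nat.add_sub_cancel]
      push_cast
      ring
    rw [Filter.EventuallyEq.iteratedDeriv_eq m hEq]
    have hG : ContDiffOn ℝ (⊤:ℕ∞)
        (fun t => deriv g t * h t + ((r':ℝ)+1) * g t * deriv h t) s :=
      ((hg.deriv_of_isOpen hs htop).mul hh).add
        ((contDiffOn_const.mul hg).mul (hh.deriv_of_isOpen hs htop))
    rw [ih r' _ h x hx hG hh h0 (by omega)]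
    by_cases hmr' : m = r'
    · subst hmr'
      rw [if_pos rfl, if_pos rfl, h0]
      rw [Nat.factorial_succ]
      push_cast
      ring
    · rw [if_neg hmr', if_neg (by omega)]

open Finset

/-- for odd `n`, the off-diagonal entries of the differentiation matrix
`D_j^{j+1}`: `b_{k,j}^{(j+1)}(θ_i) = (−1)^{(j+1)(k+i)} ((j+1)/2) csc((θ_i − θ_k)/2)`
for `i ≠ k`. -/
theorem trigHermite_offdiagonal_diffmatrix
    (n : ℕ) (hn : 1 ≤ n) (hodd : Odd n)
    (θ : Fin n → ℝ) (hθ : StrictMono θ)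
    (hθ0 : ∀ p, 0 ≤ θ p) (hθ2π : ∀ p, θ p < 2 * Real.pi) :
    ∀ (j : ℕ) (i k : Fin n), i ≠ k →
      iteratedDeriv (j + 1) (trigHermiteBasisOdd n θ k j) (θ i)
        = (-1 : ℝ) ^ ((j + 1) * ((k : ℕ) + (i : ℕ))) * (((j : ℝ) + 1) / 2) *
            (1 / Real.sin ((θ i - θ k) / 2)) := by
  classical
  intro j i k hik
  have hone : (1 : WithTop ℕ∞) ≤ ((⊤:ℕ∞) : WithTop ℕ∞) := by norm_num
  set S : Fin n → ℝ → ℝ := fun p t => Real.sin ((t - θ p) / 2) with hSdef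
  -- basic nonvanishing of sines at distinct nodes
  have hsin : ∀ p q : Fin n, p ≠ q → Real.sin ((θ p - θ q)/2) ≠ 0 := by
    intro p q hpq hzero
    have hne : θ p ≠ θ q := fun h => hpq (hθ.injective h)
    have h1 : -(2*Real.pi) < θ p - θ q := by have := hθ0 p; have := hθ2π q; linarith
    have h2 : θ p - θ q < 2*Real.pi := by have := hθ0 q; have := hθ2π p; linarith
    have := (Real.sin_eq_zero_iff_of_lt_of_lt (by linarith) (by linarith)).mp hzero
    exact hne (by linarith)
  have hSi0 : S i (θ i) = 0 := by simp [hSdef]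
  have hSne : ∀ p : Fin n, p ≠ i → S p (θ i) ≠ 0 := fun p hpi => hsin i p (fun h => hpi h.symm)
  -- numerator and denominator
  set Nf : ℝ → ℝ := fun t => (-1:ℝ)^(k:ℕ) * ∏ p ∈ univ.erase k, S p t with hNdef
  set Df : ℝ → ℝ := fun t => ∑ q : Fin n, (-1:ℝ)^(q:ℕ) * ∏ p ∈ univ.erase q, S p t with hDdef
  have hβ : berrutBasisOdd n θ k = fun t => Nf t / Df t := rfl
  have hNf : ContDiff ℝ (⊤:ℕ∞) Nf :=
    contDiff_const.mul (aux_contDiff_prod _ _ fun p _ => aux_contDiff_sn (θ p))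
  have hDf : ContDiff ℝ (⊤:ℕ∞) Df :=
    ContDiff.sum fun q _ =>
      contDiff_const.mul (aux_contDiff_prod _ _ fun p _ => aux_contDiff_sn (θ p))
  -- value of the denominator at θ i
  have hDval : Df (θ i) = (-1:ℝ)^(i:ℕ) * ∏ p ∈ univ.erase i, S p (θ i) := by
    show (∑ q : Fin n, (-1:ℝ)^(q:ℕ) * ∏ p ∈ univ.erase q, S p (θ i)) = _
    refine Finset.sum_eq_single i ?_ (by simp)
    intro b _ hbi
    rw [Finset.prod_eq_zero (Finset.mem_erase.mpr ⟨hbi.symm, Finset.mem_univ i⟩) hSi0, mul_zero]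
  have hprodne : (∏ p ∈ univ.erase i, S p (θ i)) ≠ 0 := by
    rw [Finset.prod_ne_zero_iff]
    intro p hp
    exact hSne p (Finset.mem_erase.mp hp).1
  have hDne : Df (θ i) ≠ 0 := by
    rw [hDval]
    exact mul_ne_zero (by positivity) hprodne
  have hNval : Nf (θ i) = 0 := by
    show ((-1:ℝ)^(k:ℕ) * ∏ p ∈ univ.erase k, S p (θ i)) = 0
    rw [Finset.prod_eq_zero (Finset.mem_erase.mpr ⟨hik, Finset.mem_univ i⟩) hSi0, mul_zero]
  -- the open set where the denominator does not vanish
  set s : Set ℝ := {t | Df t ≠ 0} with hsdef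
  have hsopen : IsOpen s := isOpen_compl_singleton.preimage hDf.continuous
  have hxs : θ i ∈ s := hDne
  -- smoothness of β on s
  have hh : ContDiffOn ℝ (⊤:ℕ∞) (fun t => Nf t / Df t) s :=
    hNf.contDiffOn.div hDf.contDiffOn (fun x hx => hx)
  -- g factor
  set g : ℝ → ℝ := fun t => ((2:ℝ)^j / (Nat.factorial j : ℝ)) * S k t ^ j with hgdef
  have hg : ContDiffOn ℝ (⊤:ℕ∞) g s :=
    (contDiff_const.mul ((aux_contDiff_sn (θ k)).pow j)).contDiffOn
  -- apply the key lemma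
  have hbfun : trigHermiteBasisOdd n θ k j = fun t => g t * (fun t => Nf t / Df t) t ^ (j+1) := rfl
  rw [hbfun, aux_key hsopen (j+1) (j+1) g _ (θ i) hxs hg hh (by rw [hNval, zero_div]) le_rfl,
    if_pos rfl]
  -- compute the derivative of β at θ i
  -- factor Nf through S i
  have hikmem : i ∈ univ.erase k := Finset.mem_erase.mpr ⟨hik, Finset.mem_univ i⟩
  set M : ℝ → ℝ := fun t => ∏ p ∈ (univ.erase k).erase i, S p t with hMdef
  have hNfact : Nf = fun t => (-1:ℝ)^(k:ℕ) * (S i t * M t) := by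
    funext t
    show ((-1:ℝ)^(k:ℕ) * ∏ p ∈ univ.erase k, S p t) = (-1:ℝ)^(k:ℕ) * (S i t * M t)
    rw [← Finset.mul_prod_erase _ (fun p => S p t) hikmem]
  have hM : ContDiff ℝ (⊤:ℕ∞) M :=
    aux_contDiff_prod _ _ fun p _ => aux_contDiff_sn (θ p)
  have hM' : HasDerivAt M (deriv M (θ i)) (θ i) :=
    ((hM.differentiable (zero_lt_one.trans_le hone).ne') (θ i)).hasDerivAt
  have hSi' : HasDerivAt (S i) (Real.cos ((θ i - θ i)/2) * (1/2)) (θ i) :=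
    aux_hasDerivAt_sn (θ i) (θ i)
  have hN' : HasDerivAt Nf
      ((-1:ℝ)^(k:ℕ) * ((Real.cos ((θ i - θ i)/2) * (1/2)) * M (θ i) + S i (θ i) * deriv M (θ i)))
      (θ i) := by
    rw [hNfact]
    exact (hSi'.mul hM').const_mul _
  have hNderiv : HasDerivAt Nf ((-1:ℝ)^(k:ℕ) * ((1/2) * M (θ i))) (θ i) := by
    convert hN' using 1
    rw [hSi0]
    simp
  have hD' : HasDerivAt Df (deriv Df (θ i)) (θ i) :=
    ((hDf.differentiable (zero_lt_one.trans_le hone).ne') (θ i)).hasDerivAt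
  have hβ' : HasDerivAt (fun t => Nf t / Df t)
      (((-1:ℝ)^(k:ℕ) * ((1/2) * M (θ i)) * Df (θ i) - Nf (θ i) * deriv Df (θ i)) / Df (θ i) ^ 2)
      (θ i) := hNderiv.div hD' hDne
  have hderivβ : deriv (fun t => Nf t / Df t) (θ i)
      = ((-1:ℝ)^(k:ℕ) * ((1/2) * M (θ i))) / Df (θ i) := by
    rw [hβ'.deriv, hNval]
    field_simp
    ring
  -- auxiliary nonvanishing facts
  have hM0 : M (θ i) ≠ 0 := by
    rw [Finset.prod_ne_zero_iff]
    intro p hp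
    exact hSne p (Finset.mem_erase.mp hp).1
  have hσ : S k (θ i) ≠ 0 := hSne k (Ne.symm hik)
  have hkimem : k ∈ univ.erase i := Finset.mem_erase.mpr ⟨Ne.symm hik, Finset.mem_univ k⟩
  have hsplit : (∏ p ∈ univ.erase i, S p (θ i)) = S k (θ i) * M (θ i) := by
    show _ = S k (θ i) * ∏ p ∈ (univ.erase k).erase i, S p (θ i)
    rw [Finset.erase_right_comm]
    exact (Finset.mul_prod_erase _ (fun p => S p (θ i)) hkimem).symm
  have hgval : g (θ i) = ((2:ℝ)^j / (Nat.factorial j : ℝ)) * S k (θ i) ^ j := rfl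
  rw [hderivβ, hDval, hsplit, hgval]
  have hii : ((-1:ℝ)^(i:ℕ)) * ((-1:ℝ)^(i:ℕ)) = 1 := by
    rw [← pow_add]
    exact Even.neg_one_pow ⟨(i:ℕ), rfl⟩
  have hfrac : ((-1:ℝ)^(k:ℕ) * (1/2 * M (θ i))) / ((-1:ℝ)^(i:ℕ) * (S k (θ i) * M (θ i)))
      = (-1:ℝ)^((k:ℕ)+(i:ℕ)) / (2 * S k (θ i)) := by
    rw [div_eq_div_iff
      (mul_ne_zero (pow_ne_zero _ (by norm_num)) (mul_ne_zero hσ hM0))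
      (mul_ne_zero two_ne_zero hσ), pow_add]
    linear_combination (-((-1:ℝ)^(k:ℕ) * S k (θ i) * M (θ i))) * hii
  rw [hfrac, div_pow, ← pow_mul, mul_pow,
    show (j+1)*((k:ℕ)+(i:ℕ)) = ((k:ℕ)+(i:ℕ))*(j+1) from Nat.mul_comm _ _]
  have hfact : (((j+1).factorial : ℕ) : ℝ) = (Nat.factorial j : ℝ) * ((j:ℝ)+1) := by
    rw [Nat.factorial_succ]; push_cast; ring
  have hjfac : (Nat.factorial j : ℝ) ≠ 0 := Nat.cast_ne_zero.mpr (Nat.factorial_ne_zero j)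
  have hσ' : Real.sin ((θ i - θ k) / 2) ≠ 0 := hσ
  rw [hfact]
  field_simp
  ring
end

section
/- Let n ≥ 1 be odd, let 0 ≤ θ_0 < θ_1 < ... < θ_{n-1} < 2π be real nodes, define β_k(θ) = ((−1)^k Π_{p≠k} sin((θ − θ_p)/2)) / (Σ_{j=0}^{n-1} (−1)^j Π_{p≠j} sin((θ − θ_p)/2)), b_{k,j}(θ) = (2^j/j!) sin^j((θ − θ_k)/2) · β_k(θ)^{j+1}, and (D_j^s)_{ik} := the s-th iterated derivative of b_{k,j} at θ_i. Then for all j ∈ ℕ, all s > j, and all distinct indices i ≠ k: (D_j^s)_{ik} = (1/sin((θ_i − θ_k)/2)) · [ (−1)^{(k+i)(j+1)} Σ_{q=0}^{⌊(s−j−1)/2⌋} C(s, 2q+1) ((−1)^q / 2^{2q+1}) (D_j^{s−2q−1})_{ii} − Σ_{q=j}^{s−1} C(s, s−q) · g_k^{(s−q)}(θ_i) · (D_j^q)_{ik} ], where g_k(θ) = sin((θ − θ_k)/2), g_k^{(r)} denotes its r-th iterated derivative, and C(·,·) is the binomial coefficient. -/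
open scoped BigOperators ContDiff
open Real Filter Topology Finset

lemma le_infty (m : ℕ) : (m : WithTop ℕ∞) ≤ ∞ := by exact_mod_cast le_top
lemma infty_add_one : (∞ : WithTop ℕ∞) + 1 ≤ ∞ := by simp

lemma iteratedDerivWithin_of_isOpen' {f : ℝ → ℝ} {U : Set ℝ} (hU : IsOpen U)
    {x : ℝ} (hx : x ∈ U) (m : ℕ) :
    iteratedDerivWithin m f U x = iteratedDeriv m f x := by
  simp only [iteratedDerivWithin_eq_iteratedFDerivWithin, iteratedDeriv_eq_iteratedFDeriv]
  rw [iteratedFDerivWithin_of_isOpen m hU hx]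

lemma iteratedDeriv_add_at {f g : ℝ → ℝ} {U : Set ℝ} (hU : IsOpen U)
    (hf : ContDiffOn ℝ ∞ f U) (hg : ContDiffOn ℝ ∞ g U) {x : ℝ} (hx : x ∈ U) (m : ℕ) :
    iteratedDeriv m (fun t => f t + g t) x = iteratedDeriv m f x + iteratedDeriv m g x := by
  rw [← iteratedDerivWithin_of_isOpen' hU hx m, ← iteratedDerivWithin_of_isOpen' hU hx m,
    ← iteratedDerivWithin_of_isOpen' hU hx m]
  exact iteratedDerivWithin_add hx hU.uniqueDiffOn (hf.of_le (le_infty m) x hx) (hg.of_le (le_infty m) x hx)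

lemma iteratedDeriv_const_mul_at {f : ℝ → ℝ} {U : Set ℝ} (hU : IsOpen U)
    (hf : ContDiffOn ℝ ∞ f U) {x : ℝ} (hx : x ∈ U) (c : ℝ) (m : ℕ) :
    iteratedDeriv m (fun t => c * f t) x = c * iteratedDeriv m f x := by
  rw [← iteratedDerivWithin_of_isOpen' hU hx m, ← iteratedDerivWithin_of_isOpen' hU hx m]
  exact iteratedDerivWithin_const_mul hx hU.uniqueDiffOn c (hf.of_le (le_infty m) x hx)

lemma pascal_sum (s : ℕ) (a b : ℕ → ℝ) :
    ∑ m ∈ range (s + 1), (s.choose m : ℝ) * a (m + 1) * b (s - m)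
      + ∑ m ∈ range (s + 1), (s.choose m : ℝ) * a m * b (s + 1 - m)
      = ∑ m ∈ range (s + 2), ((s + 1).choose m : ℝ) * a m * b (s + 1 - m) := by
  rw [Finset.sum_range_succ' (fun m => ((s + 1).choose m : ℝ) * a m * b (s + 1 - m)) (s + 1)]
  rw [Finset.sum_range_succ' (fun m => (s.choose m : ℝ) * a m * b (s + 1 - m)) s]
  simp only [Nat.succ_sub_succ, Nat.choose_zero_right, Nat.cast_one, one_mul, Nat.sub_zero]
  have h1 : ∑ m ∈ range s, (s.choose (m + 1) : ℝ) * a (m + 1) * b (s - m)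
      = ∑ m ∈ range (s + 1), (s.choose (m + 1) : ℝ) * a (m + 1) * b (s - m) := by
    rw [Finset.sum_range_succ, Nat.choose_succ_self]
    simp
  rw [h1, ← add_assoc, ← Finset.sum_add_distrib]
  congr 1
  apply Finset.sum_congr rfl
  intro m _
  have : ((s + 1).choose (m + 1) : ℝ) = (s.choose m : ℝ) + (s.choose (m + 1) : ℝ) := by
    rw [Nat.choose_succ_succ]; push_cast; ring
  rw [this]; ring

lemma leibniz_at {U : Set ℝ} (hU : IsOpen U) :
    ∀ (s : ℕ) (f g : ℝ → ℝ), ContDiffOn ℝ ∞ f U → ContDiffOn ℝ ∞ g U → ∀ x ∈ U,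
      iteratedDeriv s (fun t => f t * g t) x
        = ∑ m ∈ range (s + 1),
            (s.choose m : ℝ) * iteratedDeriv m f x * iteratedDeriv (s - m) g x := by
  intro s
  induction s with
  | zero => intro f g hf hg x hx; simp
  | succ s ih =>
    intro f g hf hg x hx
    have hf' : ContDiffOn ℝ ∞ (deriv f) U := hf.deriv_of_isOpen hU infty_add_one
    have hg' : ContDiffOn ℝ ∞ (deriv g) U := hg.deriv_of_isOpen hU infty_add_one
    have hdf : ∀ y ∈ U, DifferentiableAt ℝ f y := fun y hy =>
      (hf.differentiableOn (by simp)).differentiableAt (hU.mem_nhds hy)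
    have hdg : ∀ y ∈ U, DifferentiableAt ℝ g y := fun y hy =>
      (hg.differentiableOn (by simp)).differentiableAt (hU.mem_nhds hy)
    have hev : deriv (fun t => f t * g t)
        =ᶠ[𝓝 x] (fun t => deriv f t * g t + f t * deriv g t) := by
      filter_upwards [hU.mem_nhds hx] with y hy
      exact deriv_mul (hdf y hy) (hdg y hy)
    rw [iteratedDeriv_succ', hev.iteratedDeriv_eq s,
      iteratedDeriv_add_at hU (hf'.mul hg) (hf.mul hg') hx s,
      ih _ _ hf' hg x hx, ih _ _ hf hg' x hx]
    have e1 : ∀ m : ℕ, iteratedDeriv m (deriv f) x = iteratedDeriv (m + 1) f x := by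
      intro m; rw [iteratedDeriv_succ']
    have e2 : ∀ m : ℕ, m ∈ range (s + 1) →
        (s.choose m : ℝ) * iteratedDeriv m f x * iteratedDeriv (s - m) (deriv g) x
          = (s.choose m : ℝ) * iteratedDeriv m f x * iteratedDeriv (s + 1 - m) g x := by
      intro m hm
      have e1g : iteratedDeriv (s - m) (deriv g) x = iteratedDeriv (s - m + 1) g x := by
        rw [iteratedDeriv_succ']
      rw [e1g, Nat.sub_add_comm (by simp at hm; omega : m ≤ s)]
    rw [Finset.sum_congr rfl (fun m hm => by rw [e1 m]),
      Finset.sum_congr rfl e2]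
    exact pascal_sum s (fun m => iteratedDeriv m f x) (fun m => iteratedDeriv m g x)

lemma vanish_mul {U : Set ℝ} (hU : IsOpen U) {f g : ℝ → ℝ}
    (hf : ContDiffOn ℝ ∞ f U) (hg : ContDiffOn ℝ ∞ g U) {x : ℝ} (hx : x ∈ U)
    {m l : ℕ} (Hf : ∀ q < m, iteratedDeriv q f x = 0)
    (Hg : ∀ q < l, iteratedDeriv q g x = 0) :
    ∀ q < m + l, iteratedDeriv q (fun t => f t * g t) x = 0 := by
  intro q hq
  rw [leibniz_at hU q f g hf hg x hx]
  apply Finset.sum_eq_zero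
  intro r hr
  simp only [Finset.mem_range] at hr
  rcases lt_or_ge r m with h | h
  · rw [Hf r h]; ring
  · rw [Hg (q - r) (by omega)]; ring

lemma vanish_pow {U : Set ℝ} (hU : IsOpen U) {f : ℝ → ℝ}
    (hf : ContDiffOn ℝ ∞ f U) {x : ℝ} (hx : x ∈ U) (hfx : f x = 0) :
    ∀ p : ℕ, ∀ q < p, iteratedDeriv q (fun t => f t ^ p) x = 0 := by
  intro p
  induction p with
  | zero => intro q hq; omega
  | succ p ih =>
    have : (fun t => f t ^ (p + 1)) = fun t => f t ^ p * f t := by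
      funext t; rw [pow_succ]
    rw [this]
    have h1 : ∀ q < 1, iteratedDeriv q f x = 0 := by
      intro q hq
      have : q = 0 := by omega
      subst this; simpa using hfx
    exact vanish_mul hU (hf.pow p) hf hx ih h1

lemma iteratedDeriv_sin_half (c : ℝ) (r : ℕ) :
    iteratedDeriv r (fun t => Real.sin ((t - c) / 2))
      = fun t => (1 / 2 : ℝ) ^ r * Real.sin ((t - c) / 2 + r * (Real.pi / 2)) := by
  induction r with
  | zero => funext t; simp
  | succ r ih =>
    rw [iteratedDeriv_succ, ih]
    funext t
    have h1 : HasDerivAt (fun t : ℝ => (t - c) / 2 + r * (Real.pi / 2)) (1 / 2) t := by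
      simpa using (((hasDerivAt_id t).sub_const c).div_const 2).add_const (r * (Real.pi / 2))
    have h2 : HasDerivAt (fun t => Real.sin ((t - c) / 2 + r * (Real.pi / 2)))
        (Real.cos ((t - c) / 2 + r * (Real.pi / 2)) * (1 / 2)) t :=
      (Real.hasDerivAt_sin _).comp t h1
    have h3 := h2.const_mul ((1 / 2 : ℝ) ^ r)
    rw [h3.deriv]
    have : (t - c) / 2 + ((r : ℝ) + 1) * (Real.pi / 2)
        = ((t - c) / 2 + r * (Real.pi / 2)) + Real.pi / 2 := by ring
    push_cast
    rw [this, Real.sin_add_pi_div_two]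
    ring

lemma sin_half_eval_even (c : ℝ) (q : ℕ) :
    iteratedDeriv (2 * q) (fun t => Real.sin ((t - c) / 2)) c = 0 := by
  rw [iteratedDeriv_sin_half]
  simp only []
  rw [show ((c : ℝ) - c) / 2 + ((2 * q : ℕ) : ℝ) * (Real.pi / 2) = q * Real.pi by push_cast; ring,
    Real.sin_nat_mul_pi, mul_zero]

lemma sin_half_eval_odd (c : ℝ) (q : ℕ) :
    iteratedDeriv (2 * q + 1) (fun t => Real.sin ((t - c) / 2)) c
      = (-1 : ℝ) ^ q / 2 ^ (2 * q + 1) := by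
  rw [iteratedDeriv_sin_half]
  have h : ((c : ℝ) - c) / 2 + (2 * q + 1 : ℕ) * (Real.pi / 2)
      = q * Real.pi + Real.pi / 2 := by push_cast; ring
  simp only []
  rw [h, Real.sin_add_pi_div_two]
  have : Real.cos ((q : ℝ) * Real.pi) = (-1 : ℝ) ^ q := by
    simpa using Real.cos_add_nat_mul_pi 0 q
  rw [this, div_pow, one_pow]
  ring


/-- The entries `(D_j^s)_{ik} = b_{k,j}^{(s)}(θ_i)` of the differentiation matrices. -/
noncomputable def diffMatOdd (n : ℕ) (θ : Fin n → ℝ) (j s : ℕ) (i k : Fin n) : ℝ :=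
  iteratedDeriv s (trigHermiteBasisOdd n θ k j) (θ i)

/-- odd `n` case of the differentiation-matrix recursion:
for all `s > j` and `i ≠ k`,
`(D_j^s)_{ik} = csc((θ_i−θ_k)/2) [ (−1)^{(k+i)(j+1)} Σ_{q=0}^{⌊(s−j−1)/2⌋}
C(s,2q+1) ((−1)^q/2^{2q+1}) (D_j^{s−2q−1})_{ii}
− Σ_{q=j}^{s−1} C(s,s−q) g_k^{(s−q)}(θ_i) (D_j^q)_{ik} ]`
with `g_k(θ) = sin((θ − θ_k)/2)`. -/
theorem diffMatOdd_recursion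
    (n : ℕ) (hn : 1 ≤ n) (hodd : Odd n)
    (θ : Fin n → ℝ) (hθ : StrictMono θ)
    (hθ0 : ∀ p, 0 ≤ θ p) (hθ2π : ∀ p, θ p < 2 * Real.pi) :
    ∀ (j s : ℕ), j < s → ∀ (i k : Fin n), i ≠ k →
      diffMatOdd n θ j s i k
        = (1 / Real.sin ((θ i - θ k) / 2)) *
            ((-1 : ℝ) ^ (((k : ℕ) + (i : ℕ)) * (j + 1)) *
              (∑ q ∈ Finset.range ((s - j - 1) / 2 + 1),
                (s.choose (2 * q + 1) : ℝ) * ((-1 : ℝ) ^ q / 2 ^ (2 * q + 1)) *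
                  diffMatOdd n θ j (s - 2 * q - 1) i i)
              - ∑ q ∈ Finset.Ico j s,
                (s.choose (s - q) : ℝ) *
                  iteratedDeriv (s - q) (fun t => Real.sin ((t - θ k) / 2)) (θ i) *
                  diffMatOdd n θ j q i k) := by
  
  intro j s hjs i k hik
  have hsin_ne : ∀ p q : Fin n, p ≠ q → Real.sin ((θ p - θ q) / 2) ≠ 0 := by
    intro p q hpq
    rcases lt_or_gt_of_ne hpq with h | h
    · have h1 : θ p < θ q := hθ h
      have h2 : -Real.pi < (θ p - θ q) / 2 := by
        have := hθ0 p; have := hθ2π q; linarith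
      have h3 : (θ p - θ q) / 2 < 0 := by linarith
      exact ne_of_lt (Real.sin_neg_of_neg_of_neg_pi_lt h3 h2)
    · have h1 : θ q < θ p := hθ h
      have h2 : (θ p - θ q) / 2 < Real.pi := by
        have := hθ0 q; have := hθ2π p; linarith
      have h3 : 0 < (θ p - θ q) / 2 := by linarith
      exact ne_of_gt (Real.sin_pos_of_pos_of_lt_pi h3 h2)
  have hg_smooth : ∀ p : Fin n, ContDiff ℝ ∞ (fun t => Real.sin ((t - θ p) / 2)) :=
    fun p => Real.contDiff_sin.comp ((contDiff_id.sub contDiff_const).div_const 2)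
  have hS_smooth : ContDiff ℝ ∞ (fun t => ∑ m : Fin n,
      (-1 : ℝ) ^ (m : ℕ) * ∏ p ∈ Finset.univ.erase m, Real.sin ((t - θ p) / 2)) :=
    ContDiff.sum fun m _ => contDiff_const.mul (contDiff_prod fun p _ => hg_smooth p)
  have hU_open : IsOpen {t : ℝ | (∑ m : Fin n,
      (-1 : ℝ) ^ (m : ℕ) * ∏ p ∈ Finset.univ.erase m, Real.sin ((t - θ p) / 2)) ≠ 0} :=
    isOpen_compl_singleton.preimage hS_smooth.continuous
  have hSval : (∑ m : Fin n,
      (-1 : ℝ) ^ (m : ℕ) * ∏ p ∈ Finset.univ.erase m, Real.sin ((θ i - θ p) / 2))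
      = (-1 : ℝ) ^ (i : ℕ) * ∏ p ∈ Finset.univ.erase i, Real.sin ((θ i - θ p) / 2) := by
    apply Finset.sum_eq_single
    · intro m _ hmi
      rw [Finset.prod_eq_zero (Finset.mem_erase.mpr ⟨Ne.symm hmi, Finset.mem_univ i⟩)
        (by simp : Real.sin ((θ i - θ i) / 2) = 0)]
      ring
    · intro h; exact absurd (Finset.mem_univ i) h
  have hprod_ne : ∏ p ∈ Finset.univ.erase i, Real.sin ((θ i - θ p) / 2) ≠ 0 :=
    Finset.prod_ne_zero_iff.mpr fun p hp =>
      hsin_ne i p (Ne.symm (Finset.mem_erase.mp hp).1)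
  have hθiU : θ i ∈ {t : ℝ | (∑ m : Fin n,
      (-1 : ℝ) ^ (m : ℕ) * ∏ p ∈ Finset.univ.erase m, Real.sin ((t - θ p) / 2)) ≠ 0} := by
    simp only [Set.mem_setOf_eq, hSval]
    exact mul_ne_zero (pow_ne_zero _ (by norm_num)) hprod_ne
  have hβ_smooth : ∀ m : Fin n, ContDiffOn ℝ ∞ (berrutBasisOdd n θ m)
      {t : ℝ | (∑ m : Fin n,
        (-1 : ℝ) ^ (m : ℕ) * ∏ p ∈ Finset.univ.erase m, Real.sin ((t - θ p) / 2)) ≠ 0} := by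
    intro m
    unfold berrutBasisOdd
    exact ContDiffOn.div
      ((contDiff_const.mul (contDiff_prod fun p _ => hg_smooth p)).contDiffOn)
      hS_smooth.contDiffOn (fun t ht => ht)
  have hB_smooth : ∀ (m : Fin n) (j : ℕ), ContDiffOn ℝ ∞ (trigHermiteBasisOdd n θ m j)
      {t : ℝ | (∑ m : Fin n,
        (-1 : ℝ) ^ (m : ℕ) * ∏ p ∈ Finset.univ.erase m, Real.sin ((t - θ p) / 2)) ≠ 0} := by
    intro m j
    unfold trigHermiteBasisOdd
    exact (contDiffOn_const.mul (((hg_smooth m).contDiffOn).pow j)).mul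
      ((hβ_smooth m).pow (j + 1))
  have hβ0 : ∀ m : Fin n, m ≠ i → berrutBasisOdd n θ m (θ i) = 0 := by
    intro m hmi
    unfold berrutBasisOdd
    rw [Finset.prod_eq_zero (Finset.mem_erase.mpr ⟨Ne.symm hmi, Finset.mem_univ i⟩)
      (by simp : Real.sin ((θ i - θ i) / 2) = 0)]
    simp
  have hgi0 : Real.sin ((θ i - θ i) / 2) = 0 := by simp
  have hvanish_k : ∀ (k : Fin n), k ≠ i → ∀ (j : ℕ), ∀ q ≤ j,
      iteratedDeriv q (trigHermiteBasisOdd n θ k j) (θ i) = 0 := by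
    intro k hki j q hq
    have huf : trigHermiteBasisOdd n θ k j
        = fun t => ((2 : ℝ) ^ j / (Nat.factorial j : ℝ) * Real.sin ((t - θ k) / 2) ^ j)
            * berrutBasisOdd n θ k t ^ (j + 1) := rfl
    rw [huf]
    have h := vanish_mul hU_open
      (f := fun t => (2 : ℝ) ^ j / (Nat.factorial j : ℝ) * Real.sin ((t - θ k) / 2) ^ j)
      (g := fun t => berrutBasisOdd n θ k t ^ (j + 1))
      (contDiffOn_const.mul (((hg_smooth k).contDiffOn).pow j))
      ((hβ_smooth k).pow (j + 1)) hθiU (m := 0) (l := j + 1)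
      (fun q hq => absurd hq (by omega))
      (vanish_pow hU_open (hβ_smooth k) hθiU (hβ0 k hki) (j + 1))
    exact h q (by omega)
  have hvanish_i : ∀ (j : ℕ), ∀ q < j,
      iteratedDeriv q (trigHermiteBasisOdd n θ i j) (θ i) = 0 := by
    intro j q hq
    have huf : trigHermiteBasisOdd n θ i j
        = fun t => ((2 : ℝ) ^ j / (Nat.factorial j : ℝ) * Real.sin ((t - θ i) / 2) ^ j)
            * berrutBasisOdd n θ i t ^ (j + 1) := rfl
    rw [huf]
    have hf1 : ∀ q < j, iteratedDeriv q
        (fun t => (2 : ℝ) ^ j / (Nat.factorial j : ℝ) * Real.sin ((t - θ i) / 2) ^ j)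
        (θ i) = 0 := by
      intro q hq
      have h := vanish_mul hU_open
        (f := fun _ : ℝ => (2 : ℝ) ^ j / (Nat.factorial j : ℝ))
        (g := fun t => Real.sin ((t - θ i) / 2) ^ j)
        contDiffOn_const (((hg_smooth i).contDiffOn).pow j) hθiU (m := 0) (l := j)
        (fun q hq => absurd hq (by omega))
        (vanish_pow hU_open ((hg_smooth i).contDiffOn) hθiU hgi0 j)
      exact h q (by omega)
    have h := vanish_mul hU_open
      (f := fun t => (2 : ℝ) ^ j / (Nat.factorial j : ℝ) * Real.sin ((t - θ i) / 2) ^ j)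
      (g := fun t => berrutBasisOdd n θ i t ^ (j + 1))
      (contDiffOn_const.mul (((hg_smooth i).contDiffOn).pow j))
      ((hβ_smooth i).pow (j + 1)) hθiU (m := j) (l := 0)
      hf1 (fun q hq => absurd hq (by omega))
    exact h q (by omega)
  have hkey : ∀ (m : Fin n) (j : ℕ) (t : ℝ),
      Real.sin ((t - θ m) / 2) * trigHermiteBasisOdd n θ m j t
        = (2 : ℝ) ^ j / (Nat.factorial j : ℝ) * ((-1 : ℝ) ^ ((m : ℕ) * (j + 1)) *
            ((∏ p : Fin n, Real.sin ((t - θ p) / 2)) / (∑ m : Fin n,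
              (-1 : ℝ) ^ (m : ℕ) * ∏ p ∈ Finset.univ.erase m,
                Real.sin ((t - θ p) / 2))) ^ (j + 1)) := by
    intro m j t
    unfold trigHermiteBasisOdd berrutBasisOdd
    rw [← Finset.mul_prod_erase Finset.univ (fun p => Real.sin ((t - θ p) / 2))
      (Finset.mem_univ m), pow_mul]
    simp only [div_eq_mul_inv, mul_pow, inv_pow]
    ring
  have hfun : (fun t => Real.sin ((t - θ k) / 2) * trigHermiteBasisOdd n θ k j t)
      = fun t => (-1 : ℝ) ^ (((k : ℕ) + (i : ℕ)) * (j + 1)) *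
          (Real.sin ((t - θ i) / 2) * trigHermiteBasisOdd n θ i j t) := by
    funext t
    rw [hkey k j t, hkey i j t]
    have hsign : ((-1 : ℝ)) ^ ((k : ℕ) * (j + 1))
        = (-1 : ℝ) ^ (((k : ℕ) + (i : ℕ)) * (j + 1)) * (-1 : ℝ) ^ ((i : ℕ) * (j + 1)) := by
      have h2 : (-1 : ℝ) ^ (2 * ((i : ℕ) * (j + 1))) = 1 := by
        rw [pow_mul]; norm_num
      rw [← pow_add, show ((k : ℕ) + (i : ℕ)) * (j + 1) + (i : ℕ) * (j + 1)
          = (k : ℕ) * (j + 1) + 2 * ((i : ℕ) * (j + 1)) by ring,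
        pow_add, h2, mul_one]
    rw [hsign]; ring
  have hmain := congrArg (fun f => iteratedDeriv s f (θ i)) hfun
  rw [leibniz_at hU_open s _ _ ((hg_smooth k).contDiffOn) (hB_smooth k j) (θ i) hθiU] at hmain
  rw [iteratedDeriv_const_mul_at hU_open (((hg_smooth i).contDiffOn).mul (hB_smooth i j))
    hθiU _ s] at hmain
  rw [leibniz_at hU_open s _ _ ((hg_smooth i).contDiffOn) (hB_smooth i j) (θ i) hθiU] at hmain
  have t1 : (∑ m ∈ Finset.range (s + 1), (s.choose m : ℝ)
        * iteratedDeriv m (fun t => Real.sin ((t - θ k) / 2)) (θ i)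
        * iteratedDeriv (s - m) (trigHermiteBasisOdd n θ k j) (θ i))
      = ∑ q ∈ Finset.range (s + 1), (s.choose (s - q) : ℝ)
        * iteratedDeriv (s - q) (fun t => Real.sin ((t - θ k) / 2)) (θ i)
        * iteratedDeriv q (trigHermiteBasisOdd n θ k j) (θ i) := by
    rw [← Finset.sum_range_reflect]
    apply Finset.sum_congr rfl
    intro q hq
    simp only [Finset.mem_range] at hq
    rw [show s + 1 - 1 - q = s - q by omega, show s - (s - q) = q by omega]
  rw [t1, Finset.sum_range_succ] at hmain
  simp only [Nat.sub_self, Nat.choose_zero_right, Nat.cast_one, one_mul,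
    iteratedDeriv_zero] at hmain
  have t2 : (∑ q ∈ Finset.range s, (s.choose (s - q) : ℝ)
        * iteratedDeriv (s - q) (fun t => Real.sin ((t - θ k) / 2)) (θ i)
        * iteratedDeriv q (trigHermiteBasisOdd n θ k j) (θ i))
      = ∑ q ∈ Finset.Ico j s, (s.choose (s - q) : ℝ)
        * iteratedDeriv (s - q) (fun t => Real.sin ((t - θ k) / 2)) (θ i)
        * iteratedDeriv q (trigHermiteBasisOdd n θ k j) (θ i) := by
    rw [Finset.range_eq_Ico]
    refine (Finset.sum_subset (Finset.Ico_subset_Ico (by omega) le_rfl) ?_).symm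
    intro q hq hnq
    simp only [Finset.mem_Ico] at hq hnq
    rw [hvanish_k k (Ne.symm hik) j q (by omega)]
    ring
  rw [t2] at hmain
  have t3 : (∑ m ∈ Finset.range (s + 1), (s.choose m : ℝ)
        * iteratedDeriv m (fun t => Real.sin ((t - θ i) / 2)) (θ i)
        * iteratedDeriv (s - m) (trigHermiteBasisOdd n θ i j) (θ i))
      = ∑ q ∈ Finset.range ((s - j - 1) / 2 + 1), (s.choose (2 * q + 1) : ℝ)
        * ((-1 : ℝ) ^ q / 2 ^ (2 * q + 1))
        * iteratedDeriv (s - 2 * q - 1) (trigHermiteBasisOdd n θ i j) (θ i) := by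
    have himg : (Finset.range ((s - j - 1) / 2 + 1)).image (fun q => 2 * q + 1)
        ⊆ Finset.range (s + 1) := by
      intro m hm
      simp only [Finset.mem_image, Finset.mem_range] at hm ⊢
      obtain ⟨q, hq, rfl⟩ := hm
      omega
    rw [← Finset.sum_subset himg ?_]
    · rw [Finset.sum_image (fun a _ b _ h => by omega)]
      apply Finset.sum_congr rfl
      intro q hq
      rw [sin_half_eval_odd (θ i) q, show s - (2 * q + 1) = s - 2 * q - 1 by omega]
    · intro m hm hnm
      simp only [Finset.mem_range] at hm
      rcases Nat.even_or_odd m with he | ho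
      · obtain ⟨r, hr⟩ := he
        rw [show m = 2 * r by omega, sin_half_eval_even]
        ring
      · obtain ⟨q, hq⟩ := ho
        have hqK : ¬ q < (s - j - 1) / 2 + 1 := by
          intro hcon
          exact hnm (Finset.mem_image.mpr ⟨q, Finset.mem_range.mpr hcon, hq.symm⟩)
        rw [hvanish_i j (s - m) (by omega)]
        ring
  rw [t3] at hmain
  unfold diffMatOdd
  have hgki := hsin_ne i k hik
  rw [one_div, ← div_eq_inv_mul, eq_div_iff hgki]
  linear_combination hmain
end
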